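/- Let K be a compact convex set, Ω a compact Hausdorff space, and Φ : A(K) → C(Ω) a linear isometry with Φ(1) = 1 such that every positive linear functional on Φ(A(K)) has a unique positive norm-preserving extension to C(Ω). For each closed face F of K (identified with a face of the state space of A(K)), the set F̃ = {unique positive extension of δ_z : z ∈ F} is a closed face of P(Ω). -/

import Mathlib

/-- The topological dual of a seminormed space `E` (as in the older Mathlib, where it was
`NormedSpace.Dual`; removed since, in favour of `StrongDual`). -/
abbrev NormedSpace.Dual (𝕜 : Type*) [NontriviallyNormedField 𝕜] (E : Type*)
    [SeminormedAddCommGroup E] [NormedSpace 𝕜 E] : Type _ := E →L[𝕜] 𝕜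

noncomputable instance NormedSpace.Dual.instNormedSpace (𝕜 : Type*) [NontriviallyNormedField 𝕜] (E : Type*)
    [SeminormedAddCommGroup E] [NormedSpace 𝕜 E] : NormedSpace 𝕜 (NormedSpace.Dual 𝕜 E) :=
  inferInstance

noncomputable instance NormedSpace.Dual.instSeminormedAddCommGroup (𝕜 : Type*) [NontriviallyNormedField 𝕜]
    (E : Type*) [SeminormedAddCommGroup E] [NormedSpace 𝕜 E] :
    SeminormedAddCommGroup (NormedSpace.Dual 𝕜 E) :=
  inferInstance

/-- The identity map from the dual to the weak dual (old `NormedSpace.Dual.toWeakDual`). -/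
def NormedSpace.Dual.toWeakDual {𝕜 : Type*} [NontriviallyNormedField 𝕜] {E : Type*}
    [SeminormedAddCommGroup E] [NormedSpace 𝕜 E] : Dual 𝕜 E ≃ₗ[𝕜] WeakDual 𝕜 E :=
  LinearEquiv.refl 𝕜 (E →L[𝕜] 𝕜)

open NormedSpace ContinuousMap

/-- A continuous function on `K` is affine if it preserves convex combinations. -/
def IsAffineOn {E : Type*} [AddCommGroup E] [Module ℝ E] [TopologicalSpace E]
    (K : Set E) (a : C(K, ℝ)) : Prop :=
  ∀ (x y : K) (t : ℝ), 0 ≤ t → t ≤ 1 →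
    ∀ h : t • (x : E) + (1 - t) • (y : E) ∈ K,
      a ⟨t • (x : E) + (1 - t) • (y : E), h⟩ = t * a x + (1 - t) * a y

/-- `A(K)`, the affine continuous real functions on `K`, as a subspace of `C(K, ℝ)`. -/
def affineFns {E : Type*} [AddCommGroup E] [Module ℝ E] [TopologicalSpace E]
    (K : Set E) : Submodule ℝ C(K, ℝ) where
  carrier := {a | IsAffineOn K a}
  add_mem' := by
    intro a b ha hb x y t ht ht' h
    simp only [ContinuousMap.add_apply, ha x y t ht ht' h, hb x y t ht ht' h]; ring
  zero_mem' := by intro x y t ht ht' h; simp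
  smul_mem' := by
    intro c a ha x y t ht ht' h
    simp only [ContinuousMap.smul_apply, ha x y t ht ht' h, smul_eq_mul]; ring

theorem one_mem_affineFns {E : Type*} [AddCommGroup E] [Module ℝ E] [TopologicalSpace E]
    (K : Set E) : (1 : C(K, ℝ)) ∈ affineFns K := by
  intro x y t ht ht' h
  simp only [ContinuousMap.one_apply]; ring



section Aux

variable {E : Type*} [AddCommGroup E] [Module ℝ E] [TopologicalSpace E]

/-- Restriction of a continuous linear functional to `K` is an affine continuous function. -/
def clmAffine (K : Set E) (f : E →L[ℝ] ℝ) : affineFns K :=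
  ⟨⟨fun x => f (x : E), f.continuous.comp continuous_subtype_val⟩, by
    intro x y t _ _ h
    show f _ = t * f _ + (1 - t) * f _
    simp [map_add, map_smul]⟩

lemma clmAffine_apply (K : Set E) (f : E →L[ℝ] ℝ) (x : K) :
    ((clmAffine K f : affineFns K) : C(K, ℝ)) x = f (x : E) := rfl

/-- positivity criterion via distance to a multiple of one -/
lemma pos_iff_norm_sub {X : Type*} [TopologicalSpace X] [CompactSpace X]
    (f : C(X, ℝ)) (c : ℝ) (hc : 0 ≤ c) (hfc : ‖f‖ ≤ c) :
    0 ≤ f ↔ ‖f - c • 1‖ ≤ c := by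
  constructor
  · intro hf
    rw [ContinuousMap.norm_le _ hc]
    intro x
    have h1 : (0 : ℝ) ≤ f x := ContinuousMap.le_def.mp hf x
    have h2 : f x ≤ c := le_trans (le_abs_self _) (le_trans (f.norm_coe_le_norm x) hfc)
    simp only [ContinuousMap.sub_apply, ContinuousMap.smul_apply, ContinuousMap.one_apply,
      smul_eq_mul, mul_one, Real.norm_eq_abs, abs_le]
    constructor <;> linarith
  · intro h
    rw [ContinuousMap.le_def]
    intro x
    have := (ContinuousMap.norm_le _ hc).mp h x
    simp only [ContinuousMap.sub_apply, ContinuousMap.smul_apply, ContinuousMap.one_apply,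
      smul_eq_mul, mul_one, Real.norm_eq_abs, abs_le] at this
    simp only [ContinuousMap.zero_apply]
    linarith [this.1]

variable (K : Set E) [CompactSpace K]
variable {Ω : Type*} [TopologicalSpace Ω] [CompactSpace Ω] [T2Space Ω]
variable (Φ : affineFns K →L[ℝ] C(Ω, ℝ))

/-- For a unital isometry `Φ`, positivity transfers both ways. -/
lemma phi_pos_iff (hiso : ∀ a : affineFns K, ‖Φ a‖ = ‖a‖)
    (hone : Φ ⟨(1 : C(K, ℝ)), one_mem_affineFns K⟩ = 1) (a : affineFns K) :
    0 ≤ (a : C(K, ℝ)) ↔ 0 ≤ Φ a := by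
  set c : ℝ := ‖a‖ with hcdef
  have hc : 0 ≤ c := norm_nonneg a
  have hca : ‖(a : C(K, ℝ))‖ ≤ c := le_of_eq rfl
  have hcp : ‖Φ a‖ ≤ c := le_of_eq (hiso a)
  have hkey : Φ a - c • (1 : C(Ω, ℝ)) = Φ (a - c • ⟨(1 : C(K, ℝ)), one_mem_affineFns K⟩) := by
    rw [map_sub, map_smul, hone]
  have hnorm : ‖Φ a - c • (1 : C(Ω, ℝ))‖ = ‖(a : C(K, ℝ)) - c • 1‖ := by
    rw [hkey, hiso]
    rfl
  rw [pos_iff_norm_sub (a : C(K, ℝ)) c hc hca, pos_iff_norm_sub (Φ a) c hc hcp, hnorm]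

/-- every positive unital functional on `C(Ω,ℝ)` restricts along `Φ` to evaluation at a point. -/
lemma state_eval [IsTopologicalAddGroup E] [ContinuousSMul ℝ E] [T2Space E]
    (hK : Convex ℝ K)
    (hiso : ∀ a : affineFns K, ‖Φ a‖ = ‖a‖)
    (hone : Φ ⟨(1 : C(K, ℝ)), one_mem_affineFns K⟩ = 1)
    (μ : Dual ℝ C(Ω, ℝ)) (hpos : ∀ g : C(Ω, ℝ), 0 ≤ g → 0 ≤ μ g) (hμ1 : μ 1 = 1) :
    ∃ z : K, ∀ a : affineFns K, μ (Φ a) = (a : C(K, ℝ)) z := by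
  classical
  set Λ : affineFns K → ℝ := fun a => μ (Φ a) with hΛdef
  -- monotonicity against constants
  have hmono : ∀ (a : affineFns K) (c : ℝ), (∀ x : K, (a : C(K, ℝ)) x ≤ c) → Λ a ≤ c := by
    intro a c hac
    have hb : (0 : C(K, ℝ)) ≤ ((c • ⟨(1 : C(K, ℝ)), one_mem_affineFns K⟩ - a : affineFns K) : C(K, ℝ)) := by
      rw [ContinuousMap.le_def]
      intro x
      have := hac x
      show (0:ℝ) ≤ c * 1 - (a : C(K, ℝ)) x
      simp only [mul_one]
      linarith
    have := hpos _ ((phi_pos_iff K Φ hiso hone _).mp hb)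
    rw [map_sub, map_smul, hone, map_sub, map_smul, hμ1] at this
    simp only [smul_eq_mul, mul_one] at this
    simp only [hΛdef]
    linarith
  have hΛ1 : Λ ⟨(1 : C(K, ℝ)), one_mem_affineFns K⟩ = 1 := by
    simp only [hΛdef, hone, hμ1]
  haveI hKne : Nonempty K := by
    by_contra hne
    rw [not_nonempty_iff] at hne
    have h10 : (⟨(1 : C(K, ℝ)), one_mem_affineFns K⟩ : affineFns K) = 0 := by
      apply Subtype.ext
      apply ContinuousMap.ext
      intro x
      exact hne.elim x
    rw [h10] at hΛ1
    simp only [hΛdef, map_zero] at hΛ1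
    exact one_ne_zero hΛ1.symm
  -- the closed sets
  set S : affineFns K → Set E := fun a => Subtype.val '' {x : K | (a : C(K, ℝ)) x = Λ a} with hSdef
  have hScl : ∀ a, IsClosed (S a) := by
    intro a
    have h1 : IsClosed {x : K | (a : C(K, ℝ)) x = Λ a} :=
      isClosed_eq (map_continuous _) continuous_const
    exact (h1.isCompact.image continuous_subtype_val).isClosed
  have hfip : ∀ u : Finset (affineFns K), (K ∩ ⋂ a ∈ u, S a).Nonempty := by
    intro u
    set v : K → (↥u → ℝ) := fun z i => ((i : affineFns K) : C(K, ℝ)) z with hvdef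
    have hvcont : Continuous v := continuous_pi fun i => map_continuous _
    have hCcpt : IsCompact (Set.range v) := isCompact_range hvcont
    have hCcl : IsClosed (Set.range v) := hCcpt.isClosed
    have hCconv : Convex ℝ (Set.range v) := by
      rintro p ⟨z₁, rfl⟩ q ⟨z₂, rfl⟩ t₁ t₂ ht₁ ht₂ hsum
      have hmem : t₁ • (z₁ : E) + (1 - t₁) • (z₂ : E) ∈ K := by
        have := hK z₁.2 z₂.2 ht₁ ht₂ hsum
        rwa [show t₂ = 1 - t₁ by linarith] at this
      refine ⟨⟨t₁ • (z₁ : E) + (1 - t₁) • (z₂ : E), hmem⟩, ?_⟩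
      funext i
      have haff := (i : affineFns K).2 z₁ z₂ t₁ ht₁ (by linarith) hmem
      simp only [Pi.add_apply, Pi.smul_apply, hvdef, smul_eq_mul]
      rw [haff]
      rw [show t₂ = 1 - t₁ by linarith]
    have hΛmem : (fun i : ↥u => Λ (i : affineFns K)) ∈ Set.range v := by
      by_contra hnot
      obtain ⟨f, r, hfr, hrΛ⟩ := geometric_hahn_banach_closed_point hCconv hCcl hnot
      set c : ↥u → ℝ := fun i => f (fun j => if i = j then (1:ℝ) else 0) with hcdef
      set b : affineFns K := ∑ i : ↥u, c i • (i : affineFns K) with hbdef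
      have hfs : ∀ y : ↥u → ℝ, f y = ∑ i : ↥u, y i * c i := by
        intro y
        have h := LinearMap.pi_apply_eq_sum_univ (f.toLinearMap) y
        simp only [ContinuousLinearMap.coe_coe] at h
        rw [h]
        refine Finset.sum_congr rfl fun i _ => ?_
        simp only [hcdef, smul_eq_mul]
      have hbz : ∀ z : K, (b : C(K, ℝ)) z = f (v z) := by
        intro z
        have h1 : ((b : affineFns K) : C(K, ℝ)) = ∑ i : ↥u, c i • ((i : affineFns K) : C(K, ℝ)) := by
          rw [hbdef]
          push_cast
          rfl
        rw [h1, hfs (v z)]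
        simp only [ContinuousMap.coe_sum, Finset.sum_apply, ContinuousMap.coe_smul, Pi.smul_apply,
          smul_eq_mul]
        refine Finset.sum_congr rfl fun i _ => ?_
        simp only [hvdef]
        ring
      have hΛb : Λ b = f (fun i : ↥u => Λ (i : affineFns K)) := by
        rw [hfs]
        simp only [hΛdef, hbdef, map_sum, map_smul, smul_eq_mul]
        refine Finset.sum_congr rfl fun i _ => ?_
        ring
      have hble : Λ b ≤ r := hmono b r fun z => le_of_lt (by rw [hbz z]; exact hfr _ ⟨z, rfl⟩)
      rw [hΛb] at hble
      linarith
    obtain ⟨z, hz⟩ := hΛmem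
    refine ⟨(z : E), z.2, ?_⟩
    rw [Set.mem_iInter₂]
    intro a ha
    exact ⟨z, congrFun hz ⟨a, ha⟩, rfl⟩
  have hK' : IsCompact K := isCompact_iff_compactSpace.mpr ‹_›
  obtain ⟨z, hzK, hz⟩ := hK'.inter_iInter_nonempty S hScl hfip
  refine ⟨⟨z, hzK⟩, fun a => ?_⟩
  have := Set.mem_iInter.mp hz a
  obtain ⟨x, hx, hxz⟩ := this
  have : (⟨z, hzK⟩ : K) = x := Subtype.ext hxz.symm
  rw [this, hx]

/-- positive unital functionals on `C(Ω, ℝ)` have norm one. -/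
lemma norm_one_of_state (μ : Dual ℝ C(Ω, ℝ))
    (hpos : ∀ g : C(Ω, ℝ), 0 ≤ g → 0 ≤ μ g) (hμ1 : μ 1 = 1) : ‖μ‖ = 1 := by
  haveI : Nonempty Ω := by
    by_contra hne
    rw [not_nonempty_iff] at hne
    have h10 : (1 : C(Ω, ℝ)) = 0 := ContinuousMap.ext fun x => hne.elim x
    rw [h10, map_zero] at hμ1
    exact one_ne_zero hμ1.symm
  have hb : ∀ g : C(Ω, ℝ), μ g ≤ ‖g‖ := by
    intro g
    have hg : (0 : C(Ω, ℝ)) ≤ ‖g‖ • 1 - g := by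
      rw [ContinuousMap.le_def]
      intro x
      have := g.norm_coe_le_norm x
      simp only [ContinuousMap.zero_apply, ContinuousMap.sub_apply, ContinuousMap.smul_apply,
        ContinuousMap.one_apply, smul_eq_mul, mul_one]
      have := le_trans (le_abs_self _) this
      linarith
    have := hpos _ hg
    rw [map_sub, map_smul, hμ1] at this
    simp only [smul_eq_mul, mul_one] at this
    linarith
  apply le_antisymm
  · apply ContinuousLinearMap.opNorm_le_bound μ zero_le_one
    intro g
    rw [one_mul, Real.norm_eq_abs, abs_le]
    constructor
    · have := hb (-g)
      rw [map_neg, norm_neg] at this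
      linarith
    · exact hb g
  · have h1 : ‖(1 : C(Ω, ℝ))‖ = 1 := NormOneClass.norm_one
    have := μ.le_opNorm 1
    rw [h1, mul_one, hμ1, Real.norm_eq_abs, abs_one] at this
    exact this

end Aux
/-- In the setting of a unital isometry `Φ : A(K) → C(Ω)` with unique positive
norm-preserving extensions, for every closed face `F` of `K` the set `F̃` of unique positive
extensions of the evaluations at points of `F` is a (weak*-)closed face of the set `P(Ω)` of
probability measures. -/
theorem stmt_16 {E : Type*} [AddCommGroup E] [Module ℝ E] [TopologicalSpace E]
    [IsTopologicalAddGroup E] [ContinuousSMul ℝ E] [T2Space E] [LocallyConvexSpace ℝ E]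
    (K : Set E) [CompactSpace K] (hK : Convex ℝ K)
    (Ω : Type*) [TopologicalSpace Ω] [CompactSpace Ω] [T2Space Ω]
    (Φ : affineFns K →L[ℝ] C(Ω, ℝ))
    (hiso : ∀ a : affineFns K, ‖Φ a‖ = ‖a‖)
    (hone : Φ ⟨(1 : C(K, ℝ)), one_mem_affineFns K⟩ = 1)
    (hext : ∀ Λ : Dual ℝ (affineFns K),
      (∀ a : affineFns K, 0 ≤ Φ a → 0 ≤ Λ a) →
      ∃! μ : Dual ℝ C(Ω, ℝ),
        (∀ a : affineFns K, μ (Φ a) = Λ a) ∧ ‖μ‖ = ‖Λ‖ ∧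
        (∀ g : C(Ω, ℝ), 0 ≤ g → 0 ≤ μ g))
    (F : Set E) (hFK : F ⊆ K) (hFcl : IsClosed F) (hFface : IsExtreme ℝ K F)
    (P : Set (Dual ℝ C(Ω, ℝ)))
    (hP : P = {μ : Dual ℝ C(Ω, ℝ) | ‖μ‖ = 1 ∧ μ 1 = 1 ∧ ∀ g : C(Ω, ℝ), 0 ≤ g → 0 ≤ μ g})
    (Ftilde : Set (Dual ℝ C(Ω, ℝ)))
    (hFtilde : Ftilde = {μ : Dual ℝ C(Ω, ℝ) | ∃ z, ∃ hz : z ∈ F,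
      ‖μ‖ = 1 ∧ (∀ g : C(Ω, ℝ), 0 ≤ g → 0 ≤ μ g) ∧
      ∀ a : affineFns K, μ (Φ a) = (a : C(K, ℝ)) ⟨z, hFK hz⟩}) :
    IsExtreme ℝ P Ftilde ∧
    IsClosed (Dual.toWeakDual '' Ftilde : Set (WeakDual ℝ C(Ω, ℝ))) := by
  -- every member of Ftilde is unital
  have hFtP : ∀ μ ∈ Ftilde, μ (1 : C(Ω, ℝ)) = 1 := by
    intro μ hμ
    rw [hFtilde] at hμ
    obtain ⟨z, hz, _, _, he⟩ := hμ
    have := he ⟨(1 : C(K, ℝ)), one_mem_affineFns K⟩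
    rw [hone] at this
    simpa using this
  constructor
  · constructor
    · -- Ftilde ⊆ P
      intro μ hμ
      have h1 := hFtP μ hμ
      rw [hFtilde] at hμ
      obtain ⟨z, hz, hn, hp', _⟩ := hμ
      rw [hP]
      exact ⟨hn, h1, hp'⟩
    · -- extremality
      intro x₁ hx₁ x₂ hx₂ μ hμ hseg
      rw [hP] at hx₁ hx₂
      obtain ⟨hn₁, h11, hp₁⟩ := hx₁
      obtain ⟨hn₂, h21, hp₂⟩ := hx₂
      obtain ⟨z, hzF, hnμ, hpμ, heμ⟩ := hFtilde ▸ hμ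
      obtain ⟨z₁, hz₁⟩ := state_eval K Φ hK hiso hone x₁ hp₁ h11
      obtain ⟨z₂, hz₂⟩ := state_eval K Φ hK hiso hone x₂ hp₂ h21
      obtain ⟨t₁, t₂, ht₁, ht₂, hsum, heq⟩ := hseg
      -- all continuous linear functionals agree
      have hkey : ∀ f : E →L[ℝ] ℝ, f z = t₁ * f (z₁ : E) + t₂ * f (z₂ : E) := by
        intro f
        have h1 := heμ (clmAffine K f)
        rw [clmAffine_apply] at h1
        have h2 : μ (Φ (clmAffine K f)) =
            t₁ * x₁ (Φ (clmAffine K f)) + t₂ * x₂ (Φ (clmAffine K f)) := by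
          rw [← heq]
          simp [ContinuousLinearMap.add_apply, ContinuousLinearMap.smul_apply, smul_eq_mul]
        rw [h1] at h2
        rw [hz₁, hz₂, clmAffine_apply, clmAffine_apply] at h2
        exact h2
      have hzeq : z = t₁ • (z₁ : E) + t₂ • (z₂ : E) := by
        by_contra h
        obtain ⟨f, hf⟩ := SeparatingDual.exists_ne_zero (R := ℝ) (sub_ne_zero_of_ne h)
        apply hf
        rw [map_sub, map_add, map_smul, map_smul, hkey f]
        simp only [smul_eq_mul]
        ring
      have hzseg : z ∈ openSegment ℝ (z₁ : E) (z₂ : E) :=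
        ⟨t₁, t₂, ht₁, ht₂, hsum, hzeq.symm⟩
      have hz₁F := hFface.2 z₁.2 z₂.2 hzF hzseg
      rw [hFtilde]
      exact ⟨(z₁ : E), hz₁F, hn₁, hp₁, fun a => hz₁ a⟩
  · -- closedness of the image in the weak dual
    set W : Set (WeakDual ℝ C(Ω, ℝ)) :=
      {μ | (∀ g : C(Ω, ℝ), 0 ≤ g → 0 ≤ μ g) ∧ μ 1 = 1} with hWdef
    have hWcl : IsClosed W := by
      have h1 : IsClosed {μ : WeakDual ℝ C(Ω, ℝ) | ∀ g : C(Ω, ℝ), 0 ≤ g → 0 ≤ μ g} := by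
        have : {μ : WeakDual ℝ C(Ω, ℝ) | ∀ g : C(Ω, ℝ), 0 ≤ g → 0 ≤ μ g} =
            ⋂ g : {g : C(Ω, ℝ) // 0 ≤ g}, {μ : WeakDual ℝ C(Ω, ℝ) | 0 ≤ μ (g : C(Ω, ℝ))} := by
          ext μ
          simp only [Set.mem_setOf_eq, Set.mem_iInter, Subtype.forall]
        rw [this]
        exact isClosed_iInter fun g =>
          isClosed_le continuous_const (WeakDual.eval_continuous (g : C(Ω, ℝ)))
      have h2 : IsClosed {μ : WeakDual ℝ C(Ω, ℝ) | μ 1 = 1} :=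
        isClosed_eq (WeakDual.eval_continuous (1 : C(Ω, ℝ))) continuous_const
      exact h1.inter h2
    have hWsub : W ⊆ WeakDual.toStrongDual ⁻¹' Metric.closedBall 0 1 := by
      intro μ hμ
      simp only [Set.mem_preimage, Metric.mem_closedBall, dist_zero_right]
      exact le_of_eq ((dist_zero_right _).trans (norm_one_of_state (WeakDual.toStrongDual μ) hμ.1 hμ.2))
    have hWcpt : IsCompact W :=
      (WeakDual.isCompact_closedBall (0 : Dual ℝ C(Ω, ℝ)) 1).of_isClosed_subset hWcl hWsub
    set G : Set (WeakDual ℝ C(Ω, ℝ) × K) :=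
      {p | p.1 ∈ W ∧ (p.2 : E) ∈ F ∧ ∀ a : affineFns K, p.1 (Φ a) = (a : C(K, ℝ)) p.2}
        with hGdef
    have hGcl : IsClosed G := by
      have e : G = (Prod.fst ⁻¹' W) ∩ ((fun p : WeakDual ℝ C(Ω, ℝ) × K => (p.2 : E)) ⁻¹' F) ∩
          ⋂ a : affineFns K, {p : WeakDual ℝ C(Ω, ℝ) × K |
            p.1 (Φ a) = (a : C(K, ℝ)) p.2} := by
        ext p
        simp only [hGdef, Set.mem_setOf_eq, Set.mem_inter_iff, Set.mem_preimage,
          Set.mem_iInter]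
        tauto
      rw [e]
      refine IsClosed.inter (IsClosed.inter ?_ ?_) ?_
      · exact hWcl.preimage continuous_fst
      · exact hFcl.preimage (continuous_subtype_val.comp continuous_snd)
      · exact isClosed_iInter fun a => isClosed_eq
          ((WeakDual.eval_continuous (Φ a)).comp continuous_fst)
          ((map_continuous ((a : C(K, ℝ)))).comp continuous_snd)
    have hGcpt : IsCompact G := by
      refine (hWcpt.prod isCompact_univ).of_isClosed_subset hGcl ?_
      intro p hp
      exact ⟨hp.1, Set.mem_univ _⟩
    have himg : (Dual.toWeakDual '' Ftilde : Set (WeakDual ℝ C(Ω, ℝ))) = Prod.fst '' G := by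
      ext μ
      constructor
      · rintro ⟨ν, hν, rfl⟩
        have h1 := hFtP ν hν
        rw [hFtilde] at hν
        obtain ⟨z, hz, hn, hp', he⟩ := hν
        refine ⟨(Dual.toWeakDual ν, ⟨z, hFK hz⟩), ⟨⟨hp', h1⟩, hz, fun a => he a⟩, rfl⟩
      · rintro ⟨⟨ν, x⟩, ⟨⟨hp', h1⟩, hxF, he⟩, rfl⟩
        refine ⟨WeakDual.toStrongDual ν, ?_, rfl⟩
        rw [hFtilde]
        exact ⟨(x : E), hxF, norm_one_of_state _ hp' h1, hp', fun a => he a⟩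
    rw [himg]
    exact (hGcpt.image continuous_fst).isClosed
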